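/- (Kantorovich-type criterion.) Let g : ℂⁿ → ℂⁿ be differentiable on a convex open set D₀ containing ẑ, and suppose there are positive reals B, K, η such that: Dg(ẑ) is invertible with ‖Dg(ẑ)⁻¹‖ ≤ B; ‖Dg(ẑ)⁻¹ g(ẑ)‖ ≤ η; ‖Dg(x) − Dg(y)‖ ≤ K‖x − y‖ for all x, y ∈ D₀; BKη ≤ 1/2; and the closed ball of radius 2η about ẑ is contained in D₀. Then all Newton iterates N_g^k(ẑ) are defined, remain in the closed ball of radius 2η about ẑ, and converge to a point ζ with g(ζ) = 0 and ‖ζ − ẑ‖ ≤ 2η. -/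

import Mathlib

open Filter Topology Metric Set

/-- The Newton operator `N_g(z) = z − Dg(z)⁻¹ g(z)` of a map `g : ℂⁿ → ℂⁿ`, written with
`ContinuousLinearMap.inverse` (which is the inverse where the Jacobian is invertible,
and the zero map elsewhere). -/
noncomputable def newtonMap {n : ℕ} (g : EuclideanSpace ℂ (Fin n) → EuclideanSpace ℂ (Fin n))
    (z : EuclideanSpace ℂ (Fin n)) : EuclideanSpace ℂ (Fin n) :=
  z - (fderiv ℂ g z).inverse (g z)

/-- The Jacobian of `g` at `z` is invertible, i.e. it is a continuous linear isomorphism. -/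
def jacobianInvertible {n : ℕ} (g : EuclideanSpace ℂ (Fin n) → EuclideanSpace ℂ (Fin n))
    (z : EuclideanSpace ℂ (Fin n)) : Prop :=
  ∃ e : EuclideanSpace ℂ (Fin n) ≃L[ℂ] EuclideanSpace ℂ (Fin n),
    (e : EuclideanSpace ℂ (Fin n) →L[ℂ] EuclideanSpace ℂ (Fin n)) = fderiv ℂ g z

/-- **Kantorovich-type criterion.** Under the classical Kantorovich hypotheses
(bound `B` on the inverse Jacobian at `zhat`, bound `η` on the Newton step at `zhat`,
Lipschitz constant `K` for the Jacobian on a convex open set `D₀`, `BKη ≤ 1/2`, and the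
closed `2η`-ball about `zhat` contained in `D₀`), all Newton iterates of `zhat` are defined,
stay in the closed `2η`-ball about `zhat`, and converge to a zero `ζ` of `g` with
`‖ζ − zhat‖ ≤ 2η`. -/
lemma inv_oneSub_norm_le {R : Type*} [NormedRing R] [HasSummableGeomSeries R]
    (t : R) (h : ‖t‖ < 1) (hone : ‖(1 : R)‖ ≤ 1) :
    ‖((Units.oneSub t h)⁻¹ : Rˣ).val‖ ≤ (1 - ‖t‖)⁻¹ := by
  set u := Units.oneSub t h with hu
  have hval : (u : R) = 1 - t := rfl
  have hmul : (1 - t) * (↑u⁻¹ : R) = 1 := by rw [← hval]; exact u.mul_inv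
  have hrec : (↑u⁻¹ : R) = 1 + t * ↑u⁻¹ := by
    have h1 : (↑u⁻¹ : R) - t * ↑u⁻¹ = 1 := by rw [← one_sub_mul]; exact hmul
    rw [sub_eq_iff_eq_add'] at h1; rw [add_comm]; exact h1
  have hnorm : ‖(↑u⁻¹ : R)‖ ≤ 1 + ‖t‖ * ‖(↑u⁻¹ : R)‖ := by
    calc ‖(↑u⁻¹ : R)‖ = ‖1 + t * ↑u⁻¹‖ := by rw [← hrec]
    _ ≤ ‖(1:R)‖ + ‖t * (↑u⁻¹:R)‖ := norm_add_le _ _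
    _ ≤ 1 + ‖t‖ * ‖(↑u⁻¹:R)‖ := by gcongr; exact norm_mul_le _ _
  have h1t : 0 < 1 - ‖t‖ := by linarith
  have h2 : ‖(↑u⁻¹ : R)‖ * (1 - ‖t‖) ≤ 1 := by nlinarith [norm_nonneg (↑u⁻¹ : R)]
  calc ‖(↑u⁻¹ : R)‖ = ‖(↑u⁻¹ : R)‖ * (1 - ‖t‖) * (1 - ‖t‖)⁻¹ := by field_simp
  _ ≤ 1 * (1 - ‖t‖)⁻¹ := by gcongr
  _ = (1 - ‖t‖)⁻¹ := one_mul _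

lemma perturb {n : ℕ} (e : EuclideanSpace ℂ (Fin n) ≃L[ℂ] EuclideanSpace ℂ (Fin n))
    (A' : EuclideanSpace ℂ (Fin n) →L[ℂ] EuclideanSpace ℂ (Fin n))
    (h : ‖(e.symm : EuclideanSpace ℂ (Fin n) →L[ℂ] EuclideanSpace ℂ (Fin n)).comp
        (A' - (e : EuclideanSpace ℂ (Fin n) →L[ℂ] EuclideanSpace ℂ (Fin n)))‖ < 1) :
    ∃ e' : EuclideanSpace ℂ (Fin n) ≃L[ℂ] EuclideanSpace ℂ (Fin n),
      (e' : EuclideanSpace ℂ (Fin n) →L[ℂ] EuclideanSpace ℂ (Fin n)) = A' ∧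
      ‖(e'.symm : EuclideanSpace ℂ (Fin n) →L[ℂ] EuclideanSpace ℂ (Fin n))‖ ≤
        ‖(e.symm : EuclideanSpace ℂ (Fin n) →L[ℂ] EuclideanSpace ℂ (Fin n))‖ *
        (1 - ‖(e.symm : EuclideanSpace ℂ (Fin n) →L[ℂ] EuclideanSpace ℂ (Fin n)).comp
          (A' - (e : EuclideanSpace ℂ (Fin n) →L[ℂ] EuclideanSpace ℂ (Fin n)))‖)⁻¹ := by
  set s : EuclideanSpace ℂ (Fin n) →L[ℂ] EuclideanSpace ℂ (Fin n) :=
    (e.symm : EuclideanSpace ℂ (Fin n) →L[ℂ] EuclideanSpace ℂ (Fin n)).comp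
      (A' - (e : EuclideanSpace ℂ (Fin n) →L[ℂ] EuclideanSpace ℂ (Fin n))) with hs
  have ht : ‖-s‖ < 1 := by rwa [norm_neg]
  set u := Units.oneSub (-s) ht with hu
  set e₂ := ContinuousLinearEquiv.unitsEquiv ℂ (EuclideanSpace ℂ (Fin n)) u with he₂
  have h1 : (0:ℝ) < 1 - ‖s‖ := by linarith
  refine ⟨e₂.trans e, ?_, ?_⟩
  · ext1 x
    have h2 : e₂ x = x + s x := by
      show (u : EuclideanSpace ℂ (Fin n) →L[ℂ] EuclideanSpace ℂ (Fin n)) x = x + s x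
      simp [hu, Units.val_oneSub, ContinuousLinearMap.sub_apply, sub_neg_eq_add]
    show e (e₂ x) = A' x
    rw [h2]
    simp only [hs, ContinuousLinearMap.coe_comp', Function.comp_apply,
      ContinuousLinearMap.sub_apply, map_add, e.apply_symm_apply,
      ContinuousLinearEquiv.coe_coe]
    abel
  · have hinvu : ‖((u⁻¹ : _ˣ) : EuclideanSpace ℂ (Fin n) →L[ℂ] EuclideanSpace ℂ (Fin n))‖
        ≤ (1 - ‖s‖)⁻¹ := by
      have := inv_oneSub_norm_le (-s) ht (ContinuousLinearMap.norm_id_le)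
      rwa [norm_neg] at this
    apply ContinuousLinearMap.opNorm_le_bound
    · exact mul_nonneg (norm_nonneg _) (inv_nonneg.2 h1.le)
    · intro x
      have h3 : ((e₂.trans e).symm : _ →L[ℂ] _) x = (u⁻¹ : _ˣ).val (e.symm x) := rfl
      rw [h3]
      calc ‖(u⁻¹ : _ˣ).val (e.symm x)‖ ≤ ‖(u⁻¹ : _ˣ).val‖ * ‖e.symm x‖ :=
            ContinuousLinearMap.le_opNorm _ _
        _ ≤ (1 - ‖s‖)⁻¹ *
              (‖(e.symm : EuclideanSpace ℂ (Fin n) →L[ℂ] EuclideanSpace ℂ (Fin n))‖ * ‖x‖) := by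
            gcongr
            exact (e.symm : EuclideanSpace ℂ (Fin n) →L[ℂ] EuclideanSpace ℂ (Fin n)).le_opNorm x
        _ = ‖(e.symm : EuclideanSpace ℂ (Fin n) →L[ℂ] EuclideanSpace ℂ (Fin n))‖ *
              (1 - ‖s‖)⁻¹ * ‖x‖ := by ring

lemma taylor_sq {n : ℕ} (g : EuclideanSpace ℂ (Fin n) → EuclideanSpace ℂ (Fin n))
    (s : Set (EuclideanSpace ℂ (Fin n))) (hs : Convex ℝ s)
    {K : ℝ} (hK : 0 ≤ K)
    (hdiff : ∀ z ∈ s, DifferentiableAt ℂ g z)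
    (hLip : ∀ u ∈ s, ∀ v ∈ s, ‖fderiv ℂ g u - fderiv ℂ g v‖ ≤ K * ‖u - v‖)
    {x y : EuclideanSpace ℂ (Fin n)} (hx : x ∈ s) (hy : y ∈ s) :
    ‖g y - g x - fderiv ℂ g x (y - x)‖ ≤ K / 2 * ‖y - x‖ ^ 2 := by
  set v := y - x with hv
  have hseg : ∀ t ∈ Icc (0:ℝ) 1, x + t • v ∈ s := by
    intro t ht
    have h2 := hs hx hy (a := 1 - t) (b := t) (by linarith [ht.2]) ht.1 (by ring)
    have h3 : (1 - t) • x + t • y = x + t • v := by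
      rw [hv]; module
    rwa [h3] at h2
  set f : ℝ → EuclideanSpace ℂ (Fin n) :=
    fun t => g (x + t • v) - g x - t • (fderiv ℂ g x v) with hf
  set f' : ℝ → EuclideanSpace ℂ (Fin n) :=
    fun t => fderiv ℂ g (x + t • v) v - fderiv ℂ g x v with hf'
  have hline : ∀ t : ℝ, HasDerivAt (fun t : ℝ => x + t • v) v t := by
    intro t
    simpa using ((hasDerivAt_id t).smul_const v).const_add x
  have hfd : ∀ t ∈ Icc (0:ℝ) 1, HasDerivAt f (f' t) t := by
    intro t ht
    have h1 := ((hdiff _ (hseg t ht)).hasFDerivAt.restrictScalars ℝ).comp_hasDerivAt t (hline t)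
    have h2 : HasDerivAt (fun t : ℝ => t • (fderiv ℂ g x v)) (fderiv ℂ g x v) t := by
      simpa using (hasDerivAt_id t).smul_const (fderiv ℂ g x v)
    exact (h1.sub_const (g x)).sub h2
  have bound : ∀ t ∈ Ico (0:ℝ) 1, ‖f' t‖ ≤ (K * ‖v‖ ^ 2) * t := by
    intro t ht
    have htm : t ∈ Icc (0:ℝ) 1 := ⟨ht.1, ht.2.le⟩
    calc ‖f' t‖ = ‖(fderiv ℂ g (x + t • v) - fderiv ℂ g x) v‖ := by
          simp [hf', ContinuousLinearMap.sub_apply]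
      _ ≤ ‖fderiv ℂ g (x + t • v) - fderiv ℂ g x‖ * ‖v‖ :=
          ContinuousLinearMap.le_opNorm _ _
      _ ≤ (K * ‖x + t • v - x‖) * ‖v‖ := by
          gcongr
          exact hLip _ (hseg t htm) _ hx
      _ = (K * ‖v‖ ^ 2) * t := by
          rw [add_sub_cancel_left, norm_smul, Real.norm_eq_abs, abs_of_nonneg ht.1]
          ring
  have key := image_norm_le_of_norm_deriv_right_le_deriv_boundary
    (f := f) (f' := f') (a := 0) (b := 1)
    (fun t ht => (hfd t ht).continuousAt.continuousWithinAt)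
    (fun t ht => (hfd t ⟨ht.1, ht.2.le⟩).hasDerivWithinAt)
    (B := fun t => K * ‖v‖ ^ 2 / 2 * t ^ 2) (B' := fun t => (K * ‖v‖ ^ 2) * t)
    (by simp [hf])
    (fun t => by
      have := (hasDerivAt_pow 2 t).const_mul (K * ‖v‖ ^ 2 / 2)
      exact this.congr_deriv (by rw [Nat.cast_ofNat, show (2:ℕ) - 1 = 1 from rfl, pow_one]; ring))
    bound
  have h1 := key (x := 1) ⟨zero_le_one, le_refl 1⟩
  have h2 : f 1 = g y - g x - fderiv ℂ g x (y - x) := by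
    simp [hf, hv]
  rw [h2] at h1
  calc ‖g y - g x - fderiv ℂ g x (y - x)‖ ≤ K * ‖v‖ ^ 2 / 2 * 1 ^ 2 := h1
    _ = K / 2 * ‖y - x‖ ^ 2 := by rw [← hv]; ring

set_option maxHeartbeats 1000000 in
theorem kantorovich_criterion (n : ℕ)
    (g : EuclideanSpace ℂ (Fin n) → EuclideanSpace ℂ (Fin n))
    (D₀ : Set (EuclideanSpace ℂ (Fin n))) (hopen : IsOpen D₀) (hconv : Convex ℝ D₀)
    (zhat : EuclideanSpace ℂ (Fin n)) (hzhat : zhat ∈ D₀)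
    (B K η : ℝ) (hB : 0 < B) (hK : 0 < K) (hη : 0 < η)
    (hdiff : ∀ x ∈ D₀, DifferentiableAt ℂ g x)
    (hinv : jacobianInvertible g zhat)
    (hBbound : ‖(fderiv ℂ g zhat).inverse‖ ≤ B)
    (hηbound : ‖(fderiv ℂ g zhat).inverse (g zhat)‖ ≤ η)
    (hLip : ∀ x ∈ D₀, ∀ y ∈ D₀, ‖fderiv ℂ g x - fderiv ℂ g y‖ ≤ K * ‖x - y‖)
    (hBKη : B * K * η ≤ 1 / 2)
    (hball : Metric.closedBall zhat (2 * η) ⊆ D₀) :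
    (∀ k : ℕ, jacobianInvertible g ((newtonMap g)^[k] zhat)) ∧
    (∀ k : ℕ, (newtonMap g)^[k] zhat ∈ Metric.closedBall zhat (2 * η)) ∧
    ∃ ζ : EuclideanSpace ℂ (Fin n),
      Tendsto (fun k => (newtonMap g)^[k] zhat) atTop (𝓝 ζ) ∧
      g ζ = 0 ∧ ‖ζ - zhat‖ ≤ 2 * η := by
  set z : ℕ → EuclideanSpace ℂ (Fin n) := fun k => (newtonMap g)^[k] zhat with hz
  have hzsucc : ∀ k, z (k + 1) = z k - (fderiv ℂ g (z k)).inverse (g (z k)) := by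
    intro k
    rw [hz]
    simp only [Function.iterate_succ_apply']
    rfl
  -- the main induction
  have key : ∀ k : ℕ,
      (∃ e : EuclideanSpace ℂ (Fin n) ≃L[ℂ] EuclideanSpace ℂ (Fin n),
        (e : EuclideanSpace ℂ (Fin n) →L[ℂ] EuclideanSpace ℂ (Fin n)) = fderiv ℂ g (z k) ∧
        ‖(e.symm : EuclideanSpace ℂ (Fin n) →L[ℂ] EuclideanSpace ℂ (Fin n))‖ ≤ B * 2 ^ k) ∧
      ‖(fderiv ℂ g (z k)).inverse (g (z k))‖ ≤ η / 2 ^ k ∧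
      ‖z k - zhat‖ ≤ 2 * η - 2 * η / 2 ^ k := by
    intro k
    induction k with
    | zero =>
      obtain ⟨e, he⟩ := hinv
      have hsymm : ((fderiv ℂ g zhat).inverse :
          EuclideanSpace ℂ (Fin n) →L[ℂ] EuclideanSpace ℂ (Fin n)) = e.symm := by
        rw [← he, ContinuousLinearMap.inverse_equiv]
      refine ⟨⟨e, he, ?_⟩, by simpa [hz] using hηbound, by simp [hz]⟩
      rw [pow_zero, mul_one, ← hsymm]
      exact hBbound
    | succ k ih =>
      obtain ⟨⟨e, he, heB⟩, hηk, hdk⟩ := ih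
      have h2k : (0:ℝ) < 2 ^ k := by positivity
      have hsymm : ((fderiv ℂ g (z k)).inverse :
          EuclideanSpace ℂ (Fin n) →L[ℂ] EuclideanSpace ℂ (Fin n)) = e.symm := by
        rw [← he, ContinuousLinearMap.inverse_equiv]
      have hstep : z (k+1) - z k = -(e.symm (g (z k))) := by
        rw [hzsucc k, hsymm]; abel
      have hstepn : ‖z (k+1) - z k‖ ≤ η / 2 ^ k := by
        rw [hstep, norm_neg, ← ContinuousLinearEquiv.coe_coe, ← hsymm]
        exact hηk
      -- membership of z k and z (k+1) in the ball
      have hzkball : z k ∈ Metric.closedBall zhat (2 * η) := by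
        rw [Metric.mem_closedBall, dist_eq_norm]
        have : 2 * η / 2 ^ k ≥ 0 := by positivity
        linarith [hdk]
      have hdk1 : ‖z (k+1) - zhat‖ ≤ 2 * η - 2 * η / 2 ^ (k+1) := by
        have h4 : ‖z (k+1) - zhat‖ ≤ ‖z (k+1) - z k‖ + ‖z k - zhat‖ := by
          simpa using norm_add_le (z (k+1) - z k) (z k - zhat)
        have h5 : 2 * η / 2 ^ (k+1) = η / 2 ^ k := by
          rw [pow_succ]; field_simp
        rw [h5]
        have h6 : 2 * η / 2 ^ k = 2 * (η / 2 ^ k) := by ring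
        rw [h6] at hdk
        linarith
      have hzk1ball : z (k+1) ∈ Metric.closedBall zhat (2 * η) := by
        rw [Metric.mem_closedBall, dist_eq_norm]
        have : 2 * η / 2 ^ (k+1) ≥ 0 := by positivity
        linarith
      -- Taylor estimate: ‖g (z (k+1))‖ ≤ K/2 * (η/2^k)^2
      have htay := taylor_sq g (Metric.closedBall zhat (2 * η)) (convex_closedBall _ _) hK.le
        (fun w hw => hdiff w (hball hw))
        (fun u hu v hv => hLip u (hball hu) v (hball hv)) hzkball hzk1ball
      have happ : fderiv ℂ g (z k) (z (k+1) - z k) = -(g (z k)) := by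
        rw [← he, hstep]
        simp
      rw [happ] at htay
      have hgy : ‖g (z (k+1))‖ ≤ K / 2 * (η / 2 ^ k) ^ 2 := by
        have h7 : g (z (k+1)) - g (z k) - -(g (z k)) = g (z (k+1)) := by abel
        rw [h7] at htay
        calc ‖g (z (k+1))‖ ≤ K / 2 * ‖z (k+1) - z k‖ ^ 2 := htay
          _ ≤ K / 2 * (η / 2 ^ k) ^ 2 := by gcongr
      -- perturbation: invertibility at z (k+1)
      set es : EuclideanSpace ℂ (Fin n) →L[ℂ] EuclideanSpace ℂ (Fin n) := (e.symm : EuclideanSpace ℂ (Fin n) →L[ℂ] EuclideanSpace ℂ (Fin n)) with hes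
      set W : EuclideanSpace ℂ (Fin n) →L[ℂ] EuclideanSpace ℂ (Fin n) :=
        fderiv ℂ g (z (k+1)) with hW
      set ec : EuclideanSpace ℂ (Fin n) →L[ℂ] EuclideanSpace ℂ (Fin n) := (e : EuclideanSpace ℂ (Fin n) →L[ℂ] EuclideanSpace ℂ (Fin n)) with hec
      have hδ : ‖es.comp (W - ec)‖ ≤ 1 / 2 := by
        calc ‖es.comp (W - ec)‖ ≤ ‖es‖ * ‖W - ec‖ := ContinuousLinearMap.opNorm_comp_le _ _
          _ ≤ (B * 2 ^ k) * (K * (η / 2 ^ k)) := by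
              have hWec : ‖W - ec‖ ≤ K * (η / 2 ^ k) := by
                rw [he, hW]
                calc ‖W - fderiv ℂ g (z k)‖ ≤ K * ‖z (k+1) - z k‖ :=
                      hLip _ (hball hzk1ball) _ (hball hzkball)
                  _ ≤ K * (η / 2 ^ k) := by gcongr
              exact mul_le_mul heB hWec (norm_nonneg _) (by positivity)
          _ = B * K * η := by field_simp
          _ ≤ 1 / 2 := hBKη
      have hδ1 : ‖es.comp (W - ec)‖ < 1 := lt_of_le_of_lt hδ (by norm_num)
      obtain ⟨e', he', he'B⟩ := perturb e W hδ1
      have he'B2 : ‖(e'.symm : EuclideanSpace ℂ (Fin n) →L[ℂ] EuclideanSpace ℂ (Fin n))‖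
          ≤ B * 2 ^ (k+1) := by
        have hd0 : (0:ℝ) ≤ ‖es.comp (W - ec)‖ := norm_nonneg _
        have hmono : (1 - ‖es.comp (W - ec)‖)⁻¹ ≤ 2 := by
          rw [← one_div, div_le_iff₀ (by linarith)]
          linarith
        calc ‖(e'.symm : EuclideanSpace ℂ (Fin n) →L[ℂ] EuclideanSpace ℂ (Fin n))‖
            ≤ ‖es‖ * (1 - ‖es.comp (W - ec)‖)⁻¹ := he'B
          _ ≤ (B * 2 ^ k) * 2 := by
              have h0 : (0:ℝ) ≤ (1 - ‖es.comp (W - ec)‖)⁻¹ := by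
                rw [inv_nonneg]; linarith
              exact mul_le_mul heB hmono h0 (by positivity)
          _ = B * 2 ^ (k+1) := by rw [pow_succ]; ring
      have hsymm' : ((fderiv ℂ g (z (k+1))).inverse :
          EuclideanSpace ℂ (Fin n) →L[ℂ] EuclideanSpace ℂ (Fin n)) = e'.symm := by
        rw [← hW, ← he', ContinuousLinearMap.inverse_equiv]
      refine ⟨⟨e', he', he'B2⟩, ?_, hdk1⟩
      rw [hsymm']
      calc ‖(e'.symm : EuclideanSpace ℂ (Fin n) →L[ℂ] EuclideanSpace ℂ (Fin n)) (g (z (k+1)))‖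
          ≤ ‖(e'.symm : EuclideanSpace ℂ (Fin n) →L[ℂ] EuclideanSpace ℂ (Fin n))‖ *
            ‖g (z (k+1))‖ := ContinuousLinearMap.le_opNorm _ _
        _ ≤ (B * 2 ^ (k+1)) * (K / 2 * (η / 2 ^ k) ^ 2) :=
            mul_le_mul he'B2 hgy (norm_nonneg _) (by positivity)
        _ = (B * K * η) * (η / 2 ^ k) := by rw [pow_succ]; field_simp
        _ ≤ (1 / 2) * (η / 2 ^ k) := by
            have hq : (0:ℝ) ≤ η / 2 ^ k := by positivity
            nlinarith
        _ = η / 2 ^ (k+1) := by rw [pow_succ]; ring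
  -- conclusions
  have hmem : ∀ k : ℕ, z k ∈ Metric.closedBall zhat (2 * η) := by
    intro k
    rw [Metric.mem_closedBall, dist_eq_norm]
    have h1 := (key k).2.2
    have h2 : 2 * η / 2 ^ k ≥ 0 := by positivity
    linarith
  refine ⟨fun k => ⟨(key k).1.choose, (key k).1.choose_spec.1⟩, hmem, ?_⟩
  -- Cauchy
  have hdist : ∀ k, dist (z k) (z (k + 1)) ≤ η * (1 / 2) ^ k := by
    intro k
    rw [dist_eq_norm, hzsucc k]
    rw [sub_sub_cancel]
    calc ‖(fderiv ℂ g (z k)).inverse (g (z k))‖ ≤ η / 2 ^ k := (key k).2.1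
      _ = η * (1 / 2) ^ k := by rw [div_pow, one_pow]; ring
  have hcauchy : CauchySeq z := cauchySeq_of_le_geometric (1/2) η (by norm_num) hdist
  obtain ⟨ζ, hζ⟩ := cauchySeq_tendsto_of_complete hcauchy
  have hζball : ζ ∈ Metric.closedBall zhat (2 * η) :=
    Metric.isClosed_closedBall.mem_of_tendsto hζ (Filter.Eventually.of_forall hmem)
  refine ⟨ζ, hζ, ?_, ?_⟩
  · -- g ζ = 0
    have hcont : ContinuousAt g ζ := (hdiff ζ (hball hζball)).continuousAt
    have hgz : Tendsto (fun k => g (z k)) atTop (𝓝 (g ζ)) := hcont.tendsto.comp hζ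
    set M : ℝ := ‖fderiv ℂ g zhat‖ + K * (2 * η) with hM
    have hgbound : ∀ k, ‖g (z k)‖ ≤ M * (η * (1 / 2) ^ k) := by
      intro k
      obtain ⟨e, he, heB⟩ := (key k).1
      have hsymm : ((fderiv ℂ g (z k)).inverse :
          EuclideanSpace ℂ (Fin n) →L[ℂ] EuclideanSpace ℂ (Fin n)) = e.symm := by
        rw [← he, ContinuousLinearMap.inverse_equiv]
      have h1 : g (z k) = fderiv ℂ g (z k) ((fderiv ℂ g (z k)).inverse (g (z k))) := by
        rw [hsymm, ← he]
        simp
      have hop : ‖fderiv ℂ g (z k)‖ ≤ M := by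
        have h2 : ‖fderiv ℂ g (z k) - fderiv ℂ g zhat‖ ≤ K * ‖z k - zhat‖ :=
          hLip _ (hball (hmem k)) _ hzhat
        have h3 : ‖z k - zhat‖ ≤ 2 * η := by
          have := hmem k
          rwa [Metric.mem_closedBall, dist_eq_norm] at this
        calc ‖fderiv ℂ g (z k)‖ = ‖fderiv ℂ g zhat + (fderiv ℂ g (z k) - fderiv ℂ g zhat)‖ := by
              congr 1; abel
          _ ≤ ‖fderiv ℂ g zhat‖ + ‖fderiv ℂ g (z k) - fderiv ℂ g zhat‖ := norm_add_le _ _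
          _ ≤ M := by
              rw [hM]
              have : K * ‖z k - zhat‖ ≤ K * (2 * η) := by gcongr
              linarith
      calc ‖g (z k)‖ = ‖fderiv ℂ g (z k) ((fderiv ℂ g (z k)).inverse (g (z k)))‖ := by rw [← h1]
        _ ≤ ‖fderiv ℂ g (z k)‖ * ‖(fderiv ℂ g (z k)).inverse (g (z k))‖ :=
            ContinuousLinearMap.le_opNorm _ _
        _ ≤ M * (η * (1 / 2) ^ k) := by
            have h4 : ‖(fderiv ℂ g (z k)).inverse (g (z k))‖ ≤ η * (1 / 2) ^ k := by
              calc ‖(fderiv ℂ g (z k)).inverse (g (z k))‖ ≤ η / 2 ^ k := (key k).2.1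
                _ = η * (1 / 2) ^ k := by rw [div_pow, one_pow]; ring
            have h5 : (0:ℝ) ≤ M := by
              rw [hM]; positivity
            exact mul_le_mul hop h4 (norm_nonneg _) h5
    have hto0 : Tendsto (fun k : ℕ => M * (η * (1 / 2) ^ k)) atTop (𝓝 0) := by
      have := tendsto_pow_atTop_nhds_zero_of_lt_one (r := (1:ℝ)/2) (by norm_num) (by norm_num)
      simpa [mul_assoc] using this.const_mul (M * η)
    have hgz0 : Tendsto (fun k => g (z k)) atTop (𝓝 0) :=
      squeeze_zero_norm hgbound hto0
    exact tendsto_nhds_unique hgz hgz0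
  · rwa [Metric.mem_closedBall, dist_eq_norm] at hζball
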